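/- arXiv:2208.09186 — 2 statements merged into one kernel-verified Lean document; each statement's English description precedes it below -/
import Mathlib

section
/- Let P ∈ ℝ[X], let Q be a *ℝ-deformation of P, and set Ξ := Q − P ∈ ℝ*[X]. Let u ∈ ℝ with P(u) = 0 and P'(u) ≠ 0, and let ξ ∈ ℝ* be a root of Q with st ξ = u and ξ ≠ u. Then Ξ(u) ≠ 0 and the quotient (ξ − u)·P'(u)/Ξ(u) has standard part −1; equivalently, ξ − u = −(Ξ(u)/P'(u))·(1 + η) for some infinitesimal η ∈ ℝ*. -/
open Hyperreal Polynomial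

/-- The coercion `ℝ → ℝ*` as a ring homomorphism. -/
noncomputable def realToHyper : ℝ →+* ℝ* :=
  (Filter.Germ.coeRingHom _).comp (Pi.constRingHom ℕ ℝ)

open Finset
lemma realToHyper_eq (r : ℝ) : realToHyper r = (r : ℝ*) := rfl

lemma my_isSt_inv {x : ℝ*} {r : ℝ} (h : IsSt x r) (hr : r ≠ 0) : IsSt x⁻¹ r⁻¹ := by
  have hc : ContinuousAt (fun t : ℝ => t⁻¹) r := continuousAt_inv₀ hr
  exact h.map hc

lemma my_isSt_pow {x : ℝ*} {r : ℝ} (h : IsSt x r) : ∀ n : ℕ, IsSt (x ^ n) (r ^ n)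
  | 0 => by simpa using isSt_refl_real 1
  | n + 1 => by
      rw [pow_succ, pow_succ]
      exact (my_isSt_pow h n).mul h

lemma my_isSt_sum {ι : Type*} (s : Finset ι) (f : ι → ℝ*) (g : ι → ℝ)
    (h : ∀ i ∈ s, IsSt (f i) (g i)) : IsSt (∑ i ∈ s, f i) (∑ i ∈ s, g i) := by
  classical
  induction s using Finset.cons_induction with
  | empty => simpa using isSt_refl_real 0
  | cons a s' ha ih =>
      rw [Finset.sum_cons, Finset.sum_cons]
      exact (h a (Finset.mem_cons_self a s')).add
        (ih fun i hi => h i (Finset.mem_cons_of_mem hi))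

lemma my_isSt_eval (p : Polynomial ℝ) {x : ℝ*} {r : ℝ} (h : IsSt x r) :
    IsSt ((p.map realToHyper).eval x) (p.eval r) := by
  rw [Polynomial.eval_eq_sum_range' (lt_of_le_of_lt natDegree_map_le (Nat.lt_succ_self _)),
    Polynomial.eval_eq_sum_range' (Nat.lt_succ_self p.natDegree)]
  refine my_isSt_sum _ _ _ fun i _ => ?_
  rw [Polynomial.coeff_map, realToHyper_eq]
  exact (isSt_refl_real _).mul (my_isSt_pow h i)

lemma my_eval_sub_factor (p : Polynomial ℝ*) (x y : ℝ*) :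
    p.eval x - p.eval y = (x - y) *
      ∑ i ∈ range (p.natDegree + 1), p.coeff i * ∑ j ∈ range i, x ^ j * y ^ (i - 1 - j) := by
  rw [Polynomial.eval_eq_sum_range' (Nat.lt_succ_self p.natDegree),
    Polynomial.eval_eq_sum_range' (Nat.lt_succ_self p.natDegree), ← Finset.sum_sub_distrib,
    Finset.mul_sum]
  refine Finset.sum_congr rfl fun i _ => ?_
  have := geom_sum₂_mul x y i
  calc p.coeff i * x ^ i - p.coeff i * y ^ i = p.coeff i * (x ^ i - y ^ i) := by ring
    _ = p.coeff i * ((∑ j ∈ range i, x ^ j * y ^ (i - 1 - j)) * (x - y)) := by rw [this]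
    _ = (x - y) * (p.coeff i * ∑ j ∈ range i, x ^ j * y ^ (i - 1 - j)) := by ring


/-- If `Q` is a `*ℝ`-deformation of `P`, `Ξ = Q - P`, `u` is a simple root of `P` and
`ξ ≠ u` is a root of `Q` with standard part `u`, then `Ξ(u) ≠ 0` and
`st ((ξ - u)·P'(u)/Ξ(u)) = -1`; equivalently `ξ - u = -(Ξ(u)/P'(u))(1 + η)` with `η`
infinitesimal. -/
theorem simple_root_first_order (P : Polynomial ℝ) (Q : Polynomial ℝ*)
    (hdeg : Q.natDegree = P.natDegree)
    (hdef : ∀ i, Infinitesimal ((Q - P.map realToHyper).coeff i))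
    (u : ℝ) (hu : P.eval u = 0) (hu' : (derivative P).eval u ≠ 0)
    (ξ : ℝ*) (hst : IsSt ξ u) (hroot : Q.eval ξ = 0) (hne : ξ ≠ (u : ℝ*)) :
    (Q - P.map realToHyper).eval (u : ℝ*) ≠ 0 ∧
    IsSt ((ξ - (u : ℝ*)) * (((derivative P).eval u : ℝ) : ℝ*) /
      (Q - P.map realToHyper).eval (u : ℝ*)) (-1) ∧
    ∃ η : ℝ*, Infinitesimal η ∧
      ξ - (u : ℝ*) = -((Q - P.map realToHyper).eval (u : ℝ*) /
        (((derivative P).eval u : ℝ) : ℝ*)) * (1 + η) := by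
  set Ξ : Polynomial ℝ* := Q - P.map realToHyper with hΞ
  set p' : ℝ := (derivative P).eval u with hp'
  have hp'h : ((p' : ℝ) : ℝ*) ≠ 0 := by exact_mod_cast hu'
  have hξu : ξ - (u : ℝ*) ≠ 0 := sub_ne_zero.mpr hne
  -- factor P
  set R₀ : Polynomial ℝ := P /ₘ (X - C u) with hR₀
  have hPfac : (X - C u) * R₀ = P := (mul_divByMonic_eq_iff_isRoot).2 hu
  have hR₀u : R₀.eval u = p' := by
    rw [hp', ← hPfac]
    simp [derivative_mul]
  -- evaluate P.map at ξ
  have hPmap : (P.map realToHyper).eval ξ = (ξ - (u : ℝ*)) * (R₀.map realToHyper).eval ξ := by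
    rw [← hPfac]
    simp [Polynomial.map_mul, realToHyper_eq]
  set Rξ : ℝ* := (R₀.map realToHyper).eval ξ with hRξ
  have hRst : IsSt Rξ p' := hR₀u ▸ my_isSt_eval R₀ hst
  -- the Ξ part
  set T : ℝ* := ∑ i ∈ range (Ξ.natDegree + 1), Ξ.coeff i *
      ∑ j ∈ range i, ξ ^ j * ((u : ℝ*)) ^ (i - 1 - j) with hT
  have hΞdiff : Ξ.eval ξ - Ξ.eval (u : ℝ*) = (ξ - (u : ℝ*)) * T := my_eval_sub_factor Ξ ξ u
  have hTst : IsSt T 0 := by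
    have : IsSt T (∑ i ∈ range (Ξ.natDegree + 1), (0 : ℝ)) := by
      refine my_isSt_sum _ _ _ fun i _ => ?_
      have h1 : IsSt (Ξ.coeff i) 0 := hdef i
      have h2 : IsSt (∑ j ∈ range i, ξ ^ j * ((u : ℝ*)) ^ (i - 1 - j))
          (∑ j ∈ range i, u ^ j * u ^ (i - 1 - j)) := by
        refine my_isSt_sum _ _ _ fun j _ => ?_
        exact (my_isSt_pow hst j).mul (my_isSt_pow (isSt_refl_real u) _)
      simpa using h1.mul h2
    simpa using this
  -- main equation
  set W : ℝ* := Rξ + T with hW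
  have hWst : IsSt W p' := by simpa using hRst.add hTst
  have hWne : W ≠ 0 := by
    intro h0
    rw [h0] at hWst
    have h00 : IsSt (0 : ℝ*) 0 := by simpa using isSt_refl_real 0
    exact hu' (hWst.unique h00)
  have hkey : Ξ.eval (u : ℝ*) = -((ξ - (u : ℝ*)) * W) := by
    have hQ : Q.eval ξ = (P.map realToHyper).eval ξ + Ξ.eval ξ := by
      rw [hΞ]; ring_nf; rw [Polynomial.eval_sub]; ring
    have := hroot
    rw [hQ, hPmap] at this
    have h2 : Ξ.eval ξ = Ξ.eval (u : ℝ*) + (ξ - (u : ℝ*)) * T := by linarith [hΞdiff]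
    rw [h2] at this
    rw [hW]; ring_nf; ring_nf at this; linarith [this]
  have hBne : Ξ.eval (u : ℝ*) ≠ 0 := by
    rw [hkey]
    exact neg_ne_zero.mpr (mul_ne_zero hξu hWne)
  have hq : IsSt ((ξ - (u : ℝ*)) * ((p' : ℝ) : ℝ*) / Ξ.eval (u : ℝ*)) (-1) := by
    have heq : (ξ - (u : ℝ*)) * ((p' : ℝ) : ℝ*) / Ξ.eval (u : ℝ*) = -(((p' : ℝ) : ℝ*) * W⁻¹) := by
      rw [hkey]
      field_simp
    rw [heq]
    have := ((isSt_refl_real p').mul (my_isSt_inv hWst hu')).neg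
    simpa [mul_inv_cancel₀ hu'] using this
  refine ⟨hBne, hq, ?_⟩
  refine ⟨-((ξ - (u : ℝ*)) * ((p' : ℝ) : ℝ*) / Ξ.eval (u : ℝ*)) - 1, ?_, ?_⟩
  · have := (hq.neg).sub (isSt_refl_real 1)
    show IsSt _ 0; simpa using this
  · field_simp
    ring
end

section
/- Let P ∈ ℝ[X], let Q be a *ℝ-deformation of P, and set Ξ := Q − P ∈ ℝ*[X]. Let u ∈ ℝ with P(u) = 0, P'(u) = 0 and P''(u) ≠ 0, and let ξ ∈ ℝ* be a nonzero infinitesimal such that Q(u + ξ) = 0. Then Ξ(u) + ξ·Ξ'(u) ≠ 0, where Ξ' is the derivative of Ξ. -/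
open Hyperreal Polynomial

lemma isSt_pow {x : ℝ*} {r : ℝ} (h : IsSt x r) (n : ℕ) : IsSt (x ^ n) (r ^ n) := by
  induction n with
  | zero => simpa using isSt_refl_real 1
  | succ n ih => rw [pow_succ, pow_succ]; exact ih.mul h

lemma isSt_sum {s : Finset ℕ} {f : ℕ → ℝ*} {g : ℕ → ℝ}
    (h : ∀ i ∈ s, IsSt (f i) (g i)) : IsSt (∑ i ∈ s, f i) (∑ i ∈ s, g i) := by
  classical
  induction s using Finset.cons_induction with
  | empty => simpa using isSt_refl_real 0
  | cons a s ha ih =>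
      rw [Finset.sum_cons, Finset.sum_cons]
      exact (h a (Finset.mem_cons_self a s)).add
        (ih fun i hi => h i (Finset.mem_cons_of_mem hi))

/-- Evaluation of a real polynomial (mapped to `ℝ*`) at a finite point. -/
lemma isSt_eval (R : Polynomial ℝ) {x : ℝ*} {r : ℝ} (hx : IsSt x r) :
    IsSt ((R.map realToHyper).eval x) (R.eval r) := by
  rw [Polynomial.eval_eq_sum_range' (Nat.lt_succ_of_le natDegree_map_le),
    Polynomial.eval_eq_sum_range' (Nat.lt_succ_self R.natDegree)]
  refine isSt_sum fun i _ => ?_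
  rw [Polynomial.coeff_map]
  exact (isSt_refl_real (R.coeff i)).mul (isSt_pow hx i)

/-- Evaluation of a polynomial with infinitesimal coefficients at a finite point. -/
lemma infinitesimal_eval (S : Polynomial ℝ*) (hS : ∀ i, Infinitesimal (S.coeff i))
    {x : ℝ*} {r : ℝ} (hx : IsSt x r) : Infinitesimal (S.eval x) := by
  rw [Polynomial.eval_eq_sum_range]
  have : IsSt (∑ i ∈ Finset.range (S.natDegree + 1), S.coeff i * x ^ i)
      (∑ i ∈ Finset.range (S.natDegree + 1), (0 : ℝ) * r ^ i) :=
    isSt_sum fun i _ => Hyperreal.IsSt.mul (hS i) (isSt_pow hx i)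
  have h' : IsSt (∑ i ∈ Finset.range (S.natDegree + 1), S.coeff i * x ^ i) 0 := by simpa using this
  exact h'

/-- If `Q` is a `*ℝ`-deformation of `P`, `Ξ = Q - P`, `u` is a double root of `P`
(`P(u) = P'(u) = 0`, `P''(u) ≠ 0`) and `u + ξ` is a root of `Q` with `ξ` a nonzero
infinitesimal, then `Ξ(u) + ξ·Ξ'(u) ≠ 0`. -/
theorem xi_first_jet_ne_zero_of_double_root (P : Polynomial ℝ) (Q : Polynomial ℝ*)
    (hdeg : Q.natDegree = P.natDegree)
    (hdef : ∀ i, Infinitesimal ((Q - P.map realToHyper).coeff i))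
    (u : ℝ) (hu : P.eval u = 0) (hu' : (derivative P).eval u = 0)
    (hu'' : (derivative (derivative P)).eval u ≠ 0)
    (ξ : ℝ*) (hξ0 : ξ ≠ 0) (hξ : Infinitesimal ξ)
    (hroot : Q.eval ((u : ℝ*) + ξ) = 0) :
    (Q - P.map realToHyper).eval (u : ℝ*) +
      ξ * (derivative (Q - P.map realToHyper)).eval (u : ℝ*) ≠ 0 := by
  intro h
  set Ξ : Polynomial ℝ* := Q - P.map realToHyper with hΞ
  -- the second Hasse derivative of P does not vanish at u
  have hD2 : (Polynomial.hasseDeriv 2 P).eval u ≠ 0 := by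
    intro h2
    apply hu''
    have := congrArg (fun f : Polynomial ℝ => Polynomial.eval u f)
      (congrFun (Polynomial.factorial_smul_hasseDeriv (R := ℝ) 2) P)
    simp only [Function.iterate_succ, Function.iterate_zero, Function.comp_apply, id_eq,
      Pi.smul_apply, Polynomial.eval_smul] at this
    rw [← this]
    simp [h2]
  -- Taylor expansion of P at u : P = (X-u)^2 * G essentially
  set F : Polynomial ℝ := Polynomial.taylor u P with hF
  have hdvd : (Polynomial.X : Polynomial ℝ) ^ 2 ∣ F := by
    rw [Polynomial.X_pow_dvd_iff]
    intro d hd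
    interval_cases d
    · rw [hF, Polynomial.taylor_coeff_zero, hu]
    · rw [hF, Polynomial.taylor_coeff_one, hu']
  obtain ⟨G, hG⟩ := hdvd
  have hG0 : G.coeff 0 = (Polynomial.hasseDeriv 2 P).eval u := by
    have h2 : F.coeff 2 = G.coeff 0 := by
      rw [hG]; simpa using Polynomial.coeff_X_pow_mul G 2 0
    rw [← h2, hF, Polynomial.taylor_coeff]
  -- Taylor expansion of Ξ at u
  set H : Polynomial ℝ* := Polynomial.taylor (u : ℝ*) Ξ with hH
  set c0 : ℝ* := H.coeff 0 with hc0
  set c1 : ℝ* := H.coeff 1 with hc1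
  have hdvd2 : (Polynomial.X : Polynomial ℝ*) ^ 2 ∣ (H - Polynomial.C c0 - Polynomial.C c1 * Polynomial.X) := by
    rw [Polynomial.X_pow_dvd_iff]
    intro d hd
    interval_cases d <;> simp [hc0, hc1]
  obtain ⟨K, hK⟩ := hdvd2
  have hKco : ∀ i, Infinitesimal (K.coeff i) := by
    intro i
    have h1 : K.coeff i = H.coeff (i + 2) := by
      have := Polynomial.coeff_X_pow_mul K 2 i
      rw [← hK] at this
      rw [← this]
      simp [Polynomial.coeff_C, Nat.succ_ne_zero]
    rw [h1, hH, Polynomial.taylor_coeff]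
    refine infinitesimal_eval _ (fun j => ?_) (isSt_refl_real u)
    rw [Polynomial.hasseDeriv_coeff]
    have hnat : ((((j + (i + 2)).choose (i + 2) : ℕ) : ℝ*)) =
        ((((j + (i + 2)).choose (i + 2) : ℕ) : ℝ) : ℝ*) := by norm_cast
    have := Hyperreal.IsSt.mul (x := (((j + (i + 2)).choose (i + 2) : ℕ) : ℝ*))
      (r := (((j + (i + 2)).choose (i + 2) : ℕ) : ℝ)) (hnat ▸ isSt_refl_real _)
      (hdef (j + (i + 2)))
    have h' : IsSt (((j + (i + 2)).choose (i + 2) : ℕ) * Ξ.coeff (j + (i + 2)) : ℝ*) 0 := by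
      simpa using this
    exact h'
  -- relate taylor over ℝ* of P.map with map of taylor
  have htm : Polynomial.taylor ((u : ℝ*)) (P.map realToHyper) = F.map realToHyper := by
    rw [hF, Polynomial.taylor_apply, Polynomial.taylor_apply, Polynomial.map_comp]
    simp only [Polynomial.map_add, Polynomial.map_X, Polynomial.map_C]
    rfl
  -- evaluate P at u + ξ
  have hEvalP : (P.map realToHyper).eval ((u : ℝ*) + ξ) =
      ξ ^ 2 * (G.map realToHyper).eval ξ := by
    rw [add_comm, ← Polynomial.taylor_eval, htm, hG]
    simp [mul_comm]
  -- evaluate Ξ at u + ξ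
  have hEvalΞ : Ξ.eval ((u : ℝ*) + ξ) = c0 + c1 * ξ + ξ ^ 2 * K.eval ξ := by
    rw [add_comm, ← Polynomial.taylor_eval, ← hH]
    have : H = Polynomial.X ^ 2 * K + Polynomial.C c0 + Polynomial.C c1 * Polynomial.X := by
      rw [← hK]; ring
    rw [this]
    simp; ring
  -- combine
  have hc0eval : c0 = Ξ.eval (u : ℝ*) := by rw [hc0, hH, Polynomial.taylor_coeff_zero]
  have hc1eval : c1 = (derivative Ξ).eval (u : ℝ*) := by
    rw [hc1, hH, Polynomial.taylor_coeff_one]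
  have hQ : Q.eval ((u : ℝ*) + ξ) = Ξ.eval ((u : ℝ*) + ξ) + (P.map realToHyper).eval ((u : ℝ*) + ξ) := by
    rw [hΞ]; simp
  rw [hroot, hEvalΞ, hEvalP] at hQ
  have hjet : c0 + c1 * ξ = 0 := by
    rw [hc0eval, hc1eval, ← h]; ring
  have hkey : ξ ^ 2 * (K.eval ξ + (G.map realToHyper).eval ξ) = 0 := by
    rw [mul_add]; linarith [hQ, hjet]
  have hsum : K.eval ξ + (G.map realToHyper).eval ξ = 0 := by
    rcases mul_eq_zero.mp hkey with h1 | h1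
    · exact absurd h1 (pow_ne_zero 2 hξ0)
    · exact h1
  -- standard parts give contradiction
  have hKst : IsSt (K.eval ξ) 0 := infinitesimal_eval K hKco hξ
  have hGst : IsSt ((G.map realToHyper).eval ξ) (G.eval 0) := isSt_eval G hξ
  have hfin : IsSt (0 : ℝ*) (0 + G.eval 0) := hsum ▸ hKst.add hGst
  have h0 : (0 : ℝ) + G.eval 0 = 0 :=
    hfin.unique (by simpa using isSt_refl_real 0)
  exact hD2 (by rw [← hG0, Polynomial.coeff_zero_eq_eval_zero]; linarith)
end
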